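/- Let Σ_m be an n×n real positive definite matrix, A ∈ ℝ^{n×n}, V = I − (A + Aᵀ), and B = Σ_m^{1/2} V Σ_m^{1/2} with eigenvalues β₁ ≤ … ≤ βₙ and corresponding orthonormal eigenvectors q₁, …, qₙ; let k be the number of strictly negative eigenvalues and Π* = ∑_{i=1}^k q_i q_iᵀ. Then Σ_u* = Σ_m^{1/2} Π* Σ_m^{1/2} satisfies O ⪯ Σ_u* ⪯ Σ_m and Tr(V Σ_u*) ≤ Tr(V Σ) for every symmetric Σ with O ⪯ Σ ⪯ Σ_m, and the minimum value is Tr(V Σ_u*) = ∑_{i : β_i < 0} β_i. In particular, if all β_i ≥ 0 then Σ_u* = O (non-informative equilibrium), and if all β_i < 0 then Σ_u* = Σ_m (fully revealing equilibrium). -/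

import Mathlib

open Matrix

lemma aux_mul_vecMulVec {n : ℕ} (M : Matrix (Fin n) (Fin n) ℝ) (v w : Fin n → ℝ) :
    M * vecMulVec v w = vecMulVec (M.mulVec v) w := by
  ext a b
  simp [vecMulVec_apply, mul_apply, mulVec, dotProduct, Finset.sum_mul, mul_assoc]

lemma aux_smul_vecMulVec {n : ℕ} (c : ℝ) (v w : Fin n → ℝ) :
    vecMulVec (c • v) w = c • vecMulVec v w := by
  ext a b
  simp [vecMulVec_apply, mul_assoc]

lemma aux_trace_mul_vecMulVec {n : ℕ} (M : Matrix (Fin n) (Fin n) ℝ) (v w : Fin n → ℝ) :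
    (M * vecMulVec v w).trace = w ⬝ᵥ M.mulVec v := by
  simp [aux_mul_vecMulVec, trace, diag, vecMulVec_apply, dotProduct, mul_comm]

lemma aux_trace_vecMulVec_mul {n : ℕ} (M : Matrix (Fin n) (Fin n) ℝ) (v w : Fin n → ℝ) :
    (vecMulVec v w * M).trace = w ⬝ᵥ M.mulVec v := by
  rw [trace_mul_comm, aux_trace_mul_vecMulVec]

lemma aux_vecMulVec_psd {n : ℕ} (v : Fin n → ℝ) : (vecMulVec v v).PosSemidef := by
  have h : vecMulVec v v = (replicateCol (Fin 1) v) * (1 : Matrix (Fin 1) (Fin 1) ℝ) * (replicateCol (Fin 1) v)ᴴ := by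
    rw [Matrix.mul_one, conjTranspose_replicateCol, vecMulVec_eq (Fin 1)]
    simp
    rfl
  rw [h]
  exact Matrix.PosSemidef.one.mul_mul_conjTranspose_same _

lemma aux_sum_psd {n : ℕ} {ι : Type*} (s : Finset ι) (f : ι → Matrix (Fin n) (Fin n) ℝ)
    (h : ∀ i ∈ s, (f i).PosSemidef) : (∑ i ∈ s, f i).PosSemidef :=
  Finset.sum_induction f _ (fun _ _ ha hb => ha.add hb) .zero h

/-- Equilibrium information structure (Theorem 2 of the paper).
`Sm` is the source covariance `Σ_m ≻ 0`, `S` its positive (semi)definite square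
root, `V = I − (A + Aᵀ)` the cost kernel, `B = S V S` the transformed mismatch
matrix with sorted eigenvalues `β` and orthonormal eigenvectors `q`, and
`Π* = ∑_{i : βᵢ < 0} qᵢ qᵢᵀ`.  Then `Σ_u* = S Π* S` satisfies `O ⪯ Σ_u* ⪯ Σ_m`,
minimizes `Tr(V Σ)` over `{O ⪯ Σ ⪯ Σ_m}` with value `∑_{i : βᵢ < 0} βᵢ`, is `O`
when all `βᵢ ≥ 0` (non-informative) and `Σ_m` when all `βᵢ < 0` (fully revealing). -/
theorem stmt_9 {n : ℕ} (Sm A S : Matrix (Fin n) (Fin n) ℝ) (hSm : Sm.PosDef)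
    (hS : S.PosSemidef) (hSS : S * S = Sm)
    (β : Fin n → ℝ) (hβ : Monotone β) (q : Fin n → Fin n → ℝ)
    (heig : ∀ i, (S * (1 - (A + Aᵀ)) * S).mulVec (q i) = β i • q i)
    (horth : ∀ i j, q i ⬝ᵥ q j = if i = j then 1 else 0) :
    (S * (∑ i ∈ Finset.univ.filter fun i => β i < 0, vecMulVec (q i) (q i)) * S).PosSemidef ∧
    (Sm - S * (∑ i ∈ Finset.univ.filter fun i => β i < 0, vecMulVec (q i) (q i)) * S).PosSemidef ∧
    (∀ Su : Matrix (Fin n) (Fin n) ℝ, Su.PosSemidef → (Sm - Su).PosSemidef →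
      ((1 - (A + Aᵀ)) *
          (S * (∑ i ∈ Finset.univ.filter fun i => β i < 0, vecMulVec (q i) (q i)) * S)).trace
        ≤ ((1 - (A + Aᵀ)) * Su).trace) ∧
    ((1 - (A + Aᵀ)) *
        (S * (∑ i ∈ Finset.univ.filter fun i => β i < 0, vecMulVec (q i) (q i)) * S)).trace
      = ∑ i ∈ Finset.univ.filter (fun i => β i < 0), β i ∧
    ((∀ i, 0 ≤ β i) →
      S * (∑ i ∈ Finset.univ.filter fun i => β i < 0, vecMulVec (q i) (q i)) * S = 0) ∧
    ((∀ i, β i < 0) →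
      S * (∑ i ∈ Finset.univ.filter fun i => β i < 0, vecMulVec (q i) (q i)) * S = Sm) := by
  classical
  set V : Matrix (Fin n) (Fin n) ℝ := 1 - (A + Aᵀ) with hV
  set P : Matrix (Fin n) (Fin n) ℝ :=
    ∑ i ∈ Finset.univ.filter fun i => β i < 0, vecMulVec (q i) (q i) with hP
  -- completeness of the eigenbasis
  have hsum1 : ∑ i : Fin n, vecMulVec (q i) (q i) = (1 : Matrix (Fin n) (Fin n) ℝ) := by
    set Q : Matrix (Fin n) (Fin n) ℝ := of q with hQ
    have hQQ : Q * Qᵀ = 1 := by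
      ext i j
      simpa [hQ, mul_apply, one_apply, dotProduct] using horth i j
    have hQtQ : Qᵀ * Q = 1 := mul_eq_one_comm.mp hQQ
    calc ∑ i : Fin n, vecMulVec (q i) (q i) = Qᵀ * Q := by
          ext a b
          simp [hQ, mul_apply, vecMulVec_apply, Matrix.sum_apply, mul_comm]
      _ = 1 := hQtQ
  have hPpsd : P.PosSemidef :=
    aux_sum_psd _ _ fun i _ => aux_vecMulVec_psd (q i)
  have h1P : (1 : Matrix (Fin n) (Fin n) ℝ) - P
      = ∑ i ∈ Finset.univ.filter fun i => ¬ β i < 0, vecMulVec (q i) (q i) := by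
    have h := Finset.sum_filter_add_sum_filter_not Finset.univ (fun i => β i < 0)
      (fun i => vecMulVec (q i) (q i))
    rw [hsum1] at h
    rw [← hP] at h
    linear_combination (norm := abel) -h
  have h1Ppsd : ((1 : Matrix (Fin n) (Fin n) ℝ) - P).PosSemidef := by
    rw [h1P]; exact aux_sum_psd _ _ fun i _ => aux_vecMulVec_psd (q i)
  have hSH : Sᴴ = S := hS.1
  -- S is invertible
  have hdet : IsUnit S.det := by
    rw [isUnit_iff_ne_zero]
    intro h
    have h2 : S.det * S.det = Sm.det := by rw [← det_mul, hSS]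
    rw [h, mul_zero] at h2
    exact (ne_of_gt hSm.det_pos) h2.symm
  have hSinv : S * S⁻¹ = 1 := mul_nonsing_inv S hdet
  have hSinv' : S⁻¹ * S = 1 := nonsing_inv_mul S hdet
  have hSinvH : (S⁻¹)ᴴ = S⁻¹ := by rw [conjTranspose_nonsing_inv, hSH]
  -- part 1
  have part1 : (S * P * S).PosSemidef := by
    have := hPpsd.mul_mul_conjTranspose_same S
    rwa [hSH] at this
  -- part 2
  have hSm_eq : Sm - S * P * S = S * (1 - P) * S := by
    rw [mul_sub, sub_mul, mul_one, hSS]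
  have part2 : (Sm - S * P * S).PosSemidef := by
    rw [hSm_eq]
    have := h1Ppsd.mul_mul_conjTranspose_same S
    rwa [hSH] at this
  -- spectral decomposition of B = S V S
  have hBspec : S * V * S = ∑ i : Fin n, β i • vecMulVec (q i) (q i) := by
    calc S * V * S = (S * V * S) * 1 := (mul_one _).symm
      _ = ∑ i : Fin n, (S * V * S) * vecMulVec (q i) (q i) := by
          rw [← hsum1, Finset.mul_sum]
      _ = ∑ i : Fin n, β i • vecMulVec (q i) (q i) := by
          refine Finset.sum_congr rfl fun i _ => ?_
          rw [aux_mul_vecMulVec, heig i, aux_smul_vecMulVec]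
  -- trace rearrangement
  have htr : ∀ M : Matrix (Fin n) (Fin n) ℝ,
      (V * (S * M * S)).trace = ((S * V * S) * M).trace := by
    intro M
    have e1 : V * (S * M * S) = (V * S * M) * S := by simp only [mul_assoc]
    rw [e1, trace_mul_comm]
    congr 1
    simp only [mul_assoc]
  -- the trace value (part 4)
  have part4 : (V * (S * P * S)).trace = ∑ i ∈ Finset.univ.filter fun i => β i < 0, β i := by
    rw [htr, hP, Finset.mul_sum, trace_sum]
    refine Finset.sum_congr rfl fun i _ => ?_
    rw [aux_trace_mul_vecMulVec, heig i, dotProduct_smul, smul_eq_mul, horth i i]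
    simp
  -- part 3: minimality
  have part3 : ∀ Su : Matrix (Fin n) (Fin n) ℝ, Su.PosSemidef → (Sm - Su).PosSemidef →
      (V * (S * P * S)).trace ≤ (V * Su).trace := by
    intro Su hSu hSmSu
    set T : Matrix (Fin n) (Fin n) ℝ := S⁻¹ * Su * S⁻¹ with hT
    have hTpsd : T.PosSemidef := by
      have := hSu.mul_mul_conjTranspose_same S⁻¹
      rwa [hSinvH] at this
    have hTle : ((1 : Matrix (Fin n) (Fin n) ℝ) - T).PosSemidef := by
      have he : S⁻¹ * (Sm - Su) * S⁻¹ = 1 - T := by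
        rw [mul_sub, sub_mul, hT, ← hSS]
        congr 1
        calc S⁻¹ * (S * S) * S⁻¹ = (S⁻¹ * S) * (S * S⁻¹) := by simp only [mul_assoc]
          _ = 1 := by rw [hSinv', hSinv, one_mul]
      rw [← he]
      have := hSmSu.mul_mul_conjTranspose_same S⁻¹
      rwa [hSinvH] at this
    have hSu_eq : Su = S * T * S := by
      rw [hT]
      calc Su = (S * S⁻¹) * Su * (S⁻¹ * S) := by rw [hSinv, hSinv', one_mul, mul_one]
        _ = S * (S⁻¹ * Su * S⁻¹) * S := by simp only [mul_assoc]
    have ht0 : ∀ i, 0 ≤ q i ⬝ᵥ T.mulVec (q i) := by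
      intro i
      simpa using hTpsd.dotProduct_mulVec_nonneg (q i)
    have ht1 : ∀ i, q i ⬝ᵥ T.mulVec (q i) ≤ 1 := by
      intro i
      have h := hTle.dotProduct_mulVec_nonneg (q i)
      simp only [star_trivial, sub_mulVec, one_mulVec, dotProduct_sub] at h
      rw [horth i i] at h
      norm_num at h
      linarith
    have hval : (V * Su).trace = ∑ i : Fin n, β i * (q i ⬝ᵥ T.mulVec (q i)) := by
      rw [hSu_eq, htr, hBspec, Finset.sum_mul, trace_sum]
      refine Finset.sum_congr rfl fun i _ => ?_
      rw [smul_mul_assoc, trace_smul, aux_trace_vecMulVec_mul, smul_eq_mul]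
    rw [part4, hval, Finset.sum_filter]
    refine Finset.sum_le_sum fun i _ => ?_
    by_cases h : β i < 0
    · simp only [if_pos h]
      nlinarith [ht0 i, ht1 i]
    · simp only [if_neg h]
      exact mul_nonneg (not_lt.mp h) (ht0 i)
  refine ⟨part1, part2, part3, part4, ?_, ?_⟩
  · intro h
    have : (Finset.univ.filter fun i => β i < 0) = ∅ :=
      Finset.filter_false_of_mem fun i _ => not_lt.mpr (h i)
    rw [hP, this, Finset.sum_empty, mul_zero, zero_mul]
  · intro h
    have : (Finset.univ.filter fun i => β i < 0) = Finset.univ :=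
      Finset.filter_true_of_mem fun i _ => h i
    rw [hP, this, hsum1, mul_one, hSS]
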